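/- Let h > 0 with 1/h an integer, and let Ω = (0,1)^n with grid Ω^h = closure(Ω) ∩ hℤ^n. For a mesh function v^h vanishing on the boundary grid points ∂Ω^h and with finite discrete H^1 norm, there exists a constant C_p > 0 independent of h such that |v^h|_{1,h} ≥ C_p ||v^h||_{0,h}, where ||v^h||_{0,h}^2 = h^n Σ_{x ∈ Ω_0^h} v^h(x)^2 and |v^h|_{1,h}^2 = Σ_{i=1}^n ||∂^i_+ v^h||_{0,h}^2 with ∂^i_+ v^h(x) = (v^h(x + h e^i) - v^h(x))/h. -/

import Mathlib

set_option maxHeartbeats 800000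

open Finset

private lemma tele_sum (g : ℤ → ℝ) (a : ℤ) :
    ∀ b : ℤ, a ≤ b → ∑ j ∈ Finset.Ico a b, (g (j + 1) - g j) = g b - g a := by
  refine Int.le_induction
    (motive := fun b _ => ∑ j ∈ Finset.Ico a b, (g (j + 1) - g j) = g b - g a) ?_ ?_
  · simp
  · intro m hm ih
    have hins : Finset.Ico a (m + 1) = insert m (Finset.Ico a m) := by
      ext x; simp only [Finset.mem_Ico, Finset.mem_insert]; omega
    rw [hins, Finset.sum_insert (by simp), ih]; ring

private lemma double_sum_update (n : ℕ) (i : Fin n) (F : (Fin n → ℤ) → ℝ) (lo hi : ℤ) :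
    ∑ k ∈ Finset.Icc (fun _ => lo) (fun _ => hi), ∑ j ∈ Finset.Icc lo hi,
        F (Function.update k i j)
      = ((Finset.Icc lo hi).card : ℝ) *
        ∑ k ∈ Finset.Icc (fun _ : Fin n => lo) (fun _ => hi), F k := by
  set S : Finset (Fin n → ℤ) := Finset.Icc (fun _ => lo) (fun _ => hi) with hS
  set T : Finset ℤ := Finset.Icc lo hi with hT
  have hmemS : ∀ k : Fin n → ℤ, k ∈ S ↔ ∀ x, lo ≤ k x ∧ k x ≤ hi := by
    intro k
    simp [hS, Finset.mem_Icc, Pi.le_def, forall_and]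
  have key : ∑ p ∈ S ×ˢ T, F (Function.update p.1 i p.2) = ∑ p ∈ S ×ˢ T, F p.1 := by
    refine Finset.sum_nbij' (fun p => (Function.update p.1 i p.2, p.1 i))
      (fun p => (Function.update p.1 i p.2, p.1 i)) ?_ ?_ ?_ ?_ ?_
    · rintro ⟨k, j⟩ hp
      rw [Finset.mem_product] at hp ⊢
      obtain ⟨hk, hj⟩ := hp
      rw [hmemS] at hk
      rw [hT, Finset.mem_Icc] at hj
      constructor
      · rw [hmemS]
        intro x
        by_cases hx : x = i
        · subst hx; simpa [Function.update_self] using hj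
        · simpa [Function.update_of_ne hx] using hk x
      · rw [hT, Finset.mem_Icc]; exact hk i
    · rintro ⟨k, j⟩ hp
      rw [Finset.mem_product] at hp ⊢
      obtain ⟨hk, hj⟩ := hp
      rw [hmemS] at hk
      rw [hT, Finset.mem_Icc] at hj
      constructor
      · rw [hmemS]
        intro x
        by_cases hx : x = i
        · subst hx; simpa [Function.update_self] using hj
        · simpa [Function.update_of_ne hx] using hk x
      · rw [hT, Finset.mem_Icc]; exact hk i
    · rintro ⟨k, j⟩ _
      simp [Function.update_idem, Function.update_eq_self]
    · rintro ⟨k, j⟩ _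
      simp [Function.update_idem, Function.update_eq_self]
    · rintro ⟨k, j⟩ _
      simp
  have h1 : ∑ k ∈ S, ∑ j ∈ T, F (Function.update k i j)
      = ∑ p ∈ S ×ˢ T, F (Function.update p.1 i p.2) := by
    rw [Finset.sum_product]
  have h2 : ∑ p ∈ S ×ˢ T, F p.1 = ∑ k ∈ S, ∑ _j ∈ T, F k := by
    rw [Finset.sum_product]
  rw [h1, key, h2]
  simp [Finset.sum_const, nsmul_eq_mul, Finset.mul_sum]

/-- **Discrete Poincaré inequality** on `Ω = (0,1)^n`. Grid points are indexed by
integer vectors `k`, corresponding to `x = h • k`; interior grid points have all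
coordinates in `{1, …, N-1}` where `h * N = 1`; boundary grid points have all
coordinates in `{0, …, N}` with some coordinate equal to `0` or `N`.
For mesh functions vanishing on the boundary grid points, `|v|_{1,h} ≥ C_p ‖v‖_{0,h}`
with `C_p` independent of `h`. -/
theorem discrete_poincare (n : ℕ) (hn : 0 < n) :
    ∃ Cp : ℝ, 0 < Cp ∧ ∀ (h : ℝ) (N : ℕ), 0 < h → h * (N : ℝ) = 1 →
      ∀ v : (Fin n → ℤ) → ℝ,
        (∀ k : Fin n → ℤ, (∀ i, 0 ≤ k i ∧ k i ≤ (N : ℤ)) →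
          (∃ i, k i = 0 ∨ k i = (N : ℤ)) → v k = 0) →
        Cp * Real.sqrt (h ^ n *
            ∑ k ∈ Finset.Icc (fun _ => (1 : ℤ)) (fun _ => (N : ℤ) - 1), (v k) ^ 2)
          ≤ Real.sqrt (∑ i : Fin n, h ^ n *
              ∑ k ∈ Finset.Icc (fun _ => (1 : ℤ)) (fun _ => (N : ℤ) - 1),
                ((v (k + Pi.single i 1) - v k) / h) ^ 2) := by
  refine ⟨1, one_pos, ?_⟩
  intro h N hh hhN v hb
  rw [one_mul]
  apply Real.sqrt_le_sqrt
  -- basic facts about N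
  have hNne : (N : ℝ) ≠ 0 := by
    intro h0; rw [h0, mul_zero] at hhN; exact zero_ne_one hhN
  have hN1 : 1 ≤ N := Nat.one_le_iff_ne_zero.mpr (by exact_mod_cast hNne)
  have hN1R : (1 : ℝ) ≤ (N : ℝ) := by exact_mod_cast hN1
  have hN1Z : (1 : ℤ) ≤ (N : ℤ) := by exact_mod_cast hN1
  set i0 : Fin n := ⟨0, hn⟩
  set S : Finset (Fin n → ℤ) := Finset.Icc (fun _ => (1 : ℤ)) (fun _ => (N : ℤ) - 1)
    with hS
  set T : Finset ℤ := Finset.Icc (1 : ℤ) ((N : ℤ) - 1) with hT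
  set d : (Fin n → ℤ) → ℝ := fun k => v (k + Pi.single i0 1) - v k with hd
  have hmemS : ∀ k : Fin n → ℤ, k ∈ S ↔ ∀ x, 1 ≤ k x ∧ k x ≤ (N : ℤ) - 1 := by
    intro k
    simp [hS, Finset.mem_Icc, Pi.le_def, forall_and]
  -- pointwise bound via telescoping and Cauchy–Schwarz
  have pointwise : ∀ k ∈ S, v k ^ 2 ≤
      ((N : ℝ) - 1) * ∑ j ∈ T, d (Function.update k i0 j) ^ 2 := by
    intro k hk
    rw [hmemS] at hk
    have hupd : ∀ j : ℤ, Function.update k i0 j + Pi.single i0 1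
        = Function.update k i0 (j + 1) := by
      intro j; funext x
      by_cases hx : x = i0
      · subst hx; simp
      · simp [Function.update_of_ne hx, Pi.single_apply, hx]
    have hgN : v (Function.update k i0 (N : ℤ)) = 0 := by
      refine hb _ (fun x => ?_) ⟨i0, Or.inr (Function.update_self _ _ _)⟩
      by_cases hx : x = i0
      · subst hx; simp [le_trans zero_le_one hN1Z]
      · constructor
        · simp only [Function.update_of_ne hx]; linarith [(hk x).1]
        · simp only [Function.update_of_ne hx]; linarith [(hk x).2]
    have hki : k i0 ≤ (N : ℤ) := le_trans (hk i0).2 (by linarith)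
    have htele : ∑ j ∈ Finset.Ico (k i0) (N : ℤ),
          (v (Function.update k i0 (j + 1)) - v (Function.update k i0 j))
        = v (Function.update k i0 (N : ℤ)) - v (Function.update k i0 (k i0)) :=
      tele_sum (fun j => v (Function.update k i0 j)) (k i0) (N : ℤ) hki
    have hvk : v k = -∑ j ∈ Finset.Ico (k i0) (N : ℤ), d (Function.update k i0 j) := by
      have heq : ∀ j ∈ Finset.Ico (k i0) (N : ℤ), d (Function.update k i0 j)
          = v (Function.update k i0 (j + 1)) - v (Function.update k i0 j) := by
        intro j _; rw [hd]; simp only [hupd j]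
      rw [Finset.sum_congr rfl heq, htele, hgN, Function.update_eq_self]
      ring
    have hCS : (∑ j ∈ Finset.Ico (k i0) (N : ℤ), d (Function.update k i0 j)) ^ 2 ≤
        ((Finset.Ico (k i0) (N : ℤ)).card : ℝ) *
          ∑ j ∈ Finset.Ico (k i0) (N : ℤ), d (Function.update k i0 j) ^ 2 := by
      exact_mod_cast sq_sum_le_card_mul_sum_sq
        (s := Finset.Ico (k i0) (N : ℤ)) (f := fun j => d (Function.update k i0 j))
    have hcard : ((Finset.Ico (k i0) (N : ℤ)).card : ℝ) ≤ (N : ℝ) - 1 := by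
      rw [Int.card_Ico]
      have h1 : ((N : ℤ) - k i0).toNat ≤ ((N : ℤ) - 1).toNat := by
        apply Int.toNat_le_toNat; linarith [(hk i0).1]
      have h2 : ((((N : ℤ) - 1).toNat : ℤ)) = (N : ℤ) - 1 :=
        Int.toNat_of_nonneg (by linarith)
      calc (((N : ℤ) - k i0).toNat : ℝ) ≤ (((N : ℤ) - 1).toNat : ℝ) := by exact_mod_cast h1
        _ = ((((N : ℤ) - 1).toNat : ℤ) : ℝ) := by push_cast; ring
        _ = (((N : ℤ) - 1 : ℤ) : ℝ) := by rw [h2]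
        _ = (N : ℝ) - 1 := by push_cast; ring
    have hsub : Finset.Ico (k i0) (N : ℤ) ⊆ T := by
      intro j hj
      rw [Finset.mem_Ico] at hj
      rw [hT, Finset.mem_Icc]
      exact ⟨le_trans (hk i0).1 hj.1, by linarith [hj.2]⟩
    have hsumle : ∑ j ∈ Finset.Ico (k i0) (N : ℤ), d (Function.update k i0 j) ^ 2 ≤
        ∑ j ∈ T, d (Function.update k i0 j) ^ 2 :=
      Finset.sum_le_sum_of_subset_of_nonneg hsub (fun j _ _ => sq_nonneg _)
    calc v k ^ 2 = (∑ j ∈ Finset.Ico (k i0) (N : ℤ), d (Function.update k i0 j)) ^ 2 := by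
          rw [hvk]; ring
      _ ≤ ((Finset.Ico (k i0) (N : ℤ)).card : ℝ) *
            ∑ j ∈ Finset.Ico (k i0) (N : ℤ), d (Function.update k i0 j) ^ 2 := hCS
      _ ≤ ((N : ℝ) - 1) * ∑ j ∈ T, d (Function.update k i0 j) ^ 2 := by
          apply mul_le_mul hcard hsumle
            (Finset.sum_nonneg (fun j _ => sq_nonneg _)) (by linarith)
  -- sum the pointwise bound
  have hTcard : (T.card : ℝ) = (N : ℝ) - 1 := by
    rw [hT, Int.card_Icc]
    have h2 : ((((N : ℤ) - 1 + 1 - 1).toNat : ℤ)) = (N : ℤ) - 1 := by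
      rw [Int.toNat_of_nonneg (by linarith)]; ring
    calc (((N : ℤ) - 1 + 1 - 1).toNat : ℝ)
        = ((((N : ℤ) - 1 + 1 - 1).toNat : ℤ) : ℝ) := by push_cast; ring
      _ = (((N : ℤ) - 1 : ℤ) : ℝ) := by rw [h2]
      _ = (N : ℝ) - 1 := by push_cast; ring
  have hsum1 : ∑ k ∈ S, v k ^ 2 ≤ ((N : ℝ) - 1) ^ 2 * ∑ k ∈ S, d k ^ 2 := by
    calc ∑ k ∈ S, v k ^ 2
        ≤ ∑ k ∈ S, ((N : ℝ) - 1) * ∑ j ∈ T, d (Function.update k i0 j) ^ 2 :=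
          Finset.sum_le_sum pointwise
      _ = ((N : ℝ) - 1) * ∑ k ∈ S, ∑ j ∈ T, d (Function.update k i0 j) ^ 2 := by
          rw [Finset.mul_sum]
      _ = ((N : ℝ) - 1) * ((T.card : ℝ) * ∑ k ∈ S, d k ^ 2) := by
          rw [double_sum_update n i0 (fun k => d k ^ 2) 1 ((N : ℤ) - 1)]
      _ = ((N : ℝ) - 1) ^ 2 * ∑ k ∈ S, d k ^ 2 := by rw [hTcard]; ring
  -- compare with the divided differences in direction i0
  have hdiv : ∑ k ∈ S, (d k / h) ^ 2 = (1 / h ^ 2) * ∑ k ∈ S, d k ^ 2 := by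
    rw [Finset.mul_sum]
    refine Finset.sum_congr rfl (fun k _ => ?_)
    field_simp
  have hSd : (0 : ℝ) ≤ ∑ k ∈ S, d k ^ 2 := Finset.sum_nonneg (fun k _ => sq_nonneg _)
  have hfac : ((N : ℝ) - 1) ^ 2 ≤ 1 / h ^ 2 := by
    rw [le_div_iff₀ (by positivity)]
    nlinarith [hh, hN1R, hhN]
  have hsum2 : ∑ k ∈ S, v k ^ 2 ≤ ∑ k ∈ S, (d k / h) ^ 2 := by
    rw [hdiv]
    calc ∑ k ∈ S, v k ^ 2 ≤ ((N : ℝ) - 1) ^ 2 * ∑ k ∈ S, d k ^ 2 := hsum1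
      _ ≤ (1 / h ^ 2) * ∑ k ∈ S, d k ^ 2 := mul_le_mul_of_nonneg_right hfac hSd
  -- single direction is below the full sum
  have hpow : (0 : ℝ) ≤ h ^ n := by positivity
  have hsum2' : ∑ k ∈ S, ((v (k + Pi.single i0 1) - v k) / h) ^ 2
      = ∑ k ∈ S, (d k / h) ^ 2 := by simp only [hd]
  calc h ^ n * ∑ k ∈ S, v k ^ 2
      ≤ h ^ n * ∑ k ∈ S, ((v (k + Pi.single i0 1) - v k) / h) ^ 2 := by
        rw [hsum2']; exact mul_le_mul_of_nonneg_left hsum2 hpow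
    _ ≤ ∑ i : Fin n, h ^ n * ∑ k ∈ S, ((v (k + Pi.single i 1) - v k) / h) ^ 2 := by
        have hnn : ∀ j ∈ (Finset.univ : Finset (Fin n)),
            0 ≤ h ^ n * ∑ k ∈ S, ((v (k + Pi.single j 1) - v k) / h) ^ 2 :=
          fun j _ => mul_nonneg hpow (Finset.sum_nonneg fun k _ => sq_nonneg _)
        exact Finset.single_le_sum hnn (Finset.mem_univ i0)
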